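/- Fix g ≥ 1 and indices i, j, k, l, m ∈ {1,…,g}, and define (wherever σ ≠ 0) ℬ_{ijklm} = ℘_{ij}℘_{klm} + (1/3)(℘_{jk}℘_{ilm} + ℘_{jl}℘_{ikm} + ℘_{jm}℘_{ikl} − 2℘_{kl}℘_{ijm} − 2℘_{km}℘_{ijl} − 2℘_{lm}℘_{ijk}). Then there exists a universal polynomial P in the partial derivatives of σ of order at most 3 such that for every infinitely complex-differentiable σ : ℂ^g → ℂ and every u with σ(u) ≠ 0, σ(u)³ · ℬ_{ijklm}(u) = P evaluated at the partial derivatives of σ at u. In particular, although each product ℘_{ab}℘_{cde} has poles of order five along the zero set of σ, the ℬ-function has poles of order at most three there. -/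

import Mathlib

noncomputable section

/-- Partial derivative in the `i`-th coordinate direction. -/
def pd {g : ℕ} (i : Fin g) (f : (Fin g → ℂ) → ℂ) : (Fin g → ℂ) → ℂ :=
  fun u => fderiv ℂ f u (Pi.single i 1)

/-- Iterated partial derivative along a list of coordinate indices. -/
def pdIter {g : ℕ} (l : List (Fin g)) (f : (Fin g → ℂ) → ℂ) : (Fin g → ℂ) → ℂ :=
  l.foldl (fun h i => pd i h) f

/-- The 2-index Kleinian ℘-function ℘_{ij} = (σ_i σ_j − σ σ_{ij}) / σ². -/
def wp2 {g : ℕ} (σ : (Fin g → ℂ) → ℂ) (i j : Fin g) : (Fin g → ℂ) → ℂ :=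
  fun u => (pd i σ u * pd j σ u - σ u * pd j (pd i σ) u) / σ u ^ 2

/-- The m-index Kleinian ℘-function ℘_{i j k₁ ⋯ k_r}, obtained from ℘_{ij} by
successively differentiating with respect to the coordinates in `ks`. -/
def wp {g : ℕ} (σ : (Fin g → ℂ) → ℂ) (i j : Fin g) (ks : List (Fin g)) :
    (Fin g → ℂ) → ℂ :=
  ks.foldl (fun h k => pd k h) (wp2 σ i j)

/-- The ℬ-function ℬ_{ijklm} = ℘_{ij}℘_{klm} + (1/3)(℘_{jk}℘_{ilm} + ℘_{jl}℘_{ikm}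
+ ℘_{jm}℘_{ikl} − 2℘_{kl}℘_{ijm} − 2℘_{km}℘_{ijl} − 2℘_{lm}℘_{ijk}). -/
def Bfun {g : ℕ} (σ : (Fin g → ℂ) → ℂ) (i j k l m : Fin g) : (Fin g → ℂ) → ℂ :=
  fun u =>
    wp2 σ i j u * wp σ k l [m] u + (1 / 3) *
      (wp2 σ j k u * wp σ i l [m] u + wp2 σ j l u * wp σ i k [m] u
        + wp2 σ j m u * wp σ i k [l] u - 2 * wp2 σ k l u * wp σ i j [m] u
        - 2 * wp2 σ k m u * wp σ i j [l] u - 2 * wp2 σ l m u * wp σ i j [k] u)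

lemma ContDiff.pd {g : ℕ} {f : (Fin g → ℂ) → ℂ} (hf : ContDiff ℂ ⊤ f) (i : Fin g) :
    ContDiff ℂ ⊤ (_root_.pd i f) := by
  have h1 : ContDiff ℂ ⊤ (fderiv ℂ f) := hf.fderiv_right (by simp)
  exact h1.clm_apply contDiff_const

lemma pd_sub {g : ℕ} {f h : (Fin g → ℂ) → ℂ} {u : Fin g → ℂ} (m : Fin g)
    (hf : DifferentiableAt ℂ f u) (hh : DifferentiableAt ℂ h u) :
    pd m (fun v => f v - h v) u = pd m f u - pd m h u := by
  simp [pd, fderiv_fun_sub hf hh]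

lemma pd_mul {g : ℕ} {f h : (Fin g → ℂ) → ℂ} {u : Fin g → ℂ} (m : Fin g)
    (hf : DifferentiableAt ℂ f u) (hh : DifferentiableAt ℂ h u) :
    pd m (fun v => f v * h v) u = f u * pd m h u + h u * pd m f u := by
  simp [pd, fderiv_fun_mul hf hh]

lemma pd_div {g : ℕ} {f h : (Fin g → ℂ) → ℂ} {u : Fin g → ℂ} (m : Fin g)
    (hf : DifferentiableAt ℂ f u) (hh : DifferentiableAt ℂ h u) (h0 : h u ≠ 0) :
    pd m (fun v => f v / h v) u
      = (pd m f u * h u - f u * pd m h u) / h u ^ 2 := by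
  have hinv : HasFDerivAt (fun v => (h v)⁻¹) ((-(h u ^ 2)⁻¹) • fderiv ℂ h u) u :=
    (hasDerivAt_inv h0).comp_hasFDerivAt u hh.hasFDerivAt
  have hmul : HasFDerivAt (fun v => f v * (h v)⁻¹)
      (f u • ((-(h u ^ 2)⁻¹) • fderiv ℂ h u) + (h u)⁻¹ • fderiv ℂ f u) u :=
    hf.hasFDerivAt.mul hinv
  have key : pd m (fun v => f v * (h v)⁻¹) u
      = f u * ((-(h u ^ 2)⁻¹) • fderiv ℂ h u) (Pi.single m 1)
        + (h u)⁻¹ * fderiv ℂ f u (Pi.single m 1) := by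
    simp [pd, hmul.fderiv]
  simp only [div_eq_mul_inv]
  rw [key]
  simp only [pd, ContinuousLinearMap.smul_apply, smul_eq_mul]
  field_simp
  ring

lemma wp3_eq {g : ℕ} {σ : (Fin g → ℂ) → ℂ} (hσ : ContDiff ℂ ⊤ σ) (k l m : Fin g)
    (u : Fin g → ℂ) (h0 : σ u ≠ 0) :
    wp σ k l [m] u =
      (σ u * (pd m (pd k σ) u * pd l σ u + pd k σ u * pd m (pd l σ) u
          - pd m σ u * pd l (pd k σ) u - σ u * pd m (pd l (pd k σ)) u)
        - 2 * pd m σ u * (pd k σ u * pd l σ u - σ u * pd l (pd k σ) u)) / σ u ^ 3 := by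
  have dσ : DifferentiableAt ℂ σ u := (hσ.differentiable (by simp)).differentiableAt
  have dk : DifferentiableAt ℂ (pd k σ) u :=
    ((hσ.pd k).differentiable (by simp)).differentiableAt
  have dl : DifferentiableAt ℂ (pd l σ) u :=
    ((hσ.pd l).differentiable (by simp)).differentiableAt
  have dkl : DifferentiableAt ℂ (pd l (pd k σ)) u :=
    (((hσ.pd k).pd l).differentiable (by simp)).differentiableAt
  have hN : DifferentiableAt ℂ (fun v => pd k σ v * pd l σ v - σ v * pd l (pd k σ) v) u :=
    (dk.mul dl).sub (dσ.mul dkl)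
  have hD : DifferentiableAt ℂ (fun v => σ v ^ 2) u := dσ.pow 2
  have hwp : wp σ k l [m] u
      = pd m (fun v => (pd k σ v * pd l σ v - σ v * pd l (pd k σ) v) / σ v ^ 2) u := rfl
  rw [hwp, pd_div m hN hD (pow_ne_zero 2 h0)]
  have e1 : pd m (fun v => pd k σ v * pd l σ v - σ v * pd l (pd k σ) v) u
      = pd m (fun v => pd k σ v * pd l σ v) u
        - pd m (fun v => σ v * pd l (pd k σ) v) u := pd_sub m (dk.mul dl) (dσ.mul dkl)
  have e2 : pd m (fun v => pd k σ v * pd l σ v) u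
      = pd k σ u * pd m (pd l σ) u + pd l σ u * pd m (pd k σ) u := pd_mul m dk dl
  have e3 : pd m (fun v => σ v * pd l (pd k σ) v) u
      = σ u * pd m (pd l (pd k σ)) u + pd l (pd k σ) u * pd m σ u := pd_mul m dσ dkl
  have e4 : pd m (fun v => σ v ^ 2) u = 2 * σ u * pd m σ u := by
    have hrw : (fun v => σ v ^ 2) = fun v => σ v * σ v := by funext v; ring
    rw [hrw, pd_mul m dσ dσ]; ring
  rw [e1, e2, e3, e4]
  field_simp [h0]
  ring

set_option maxHeartbeats 2000000 in
open MvPolynomial in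
/-- there is a universal polynomial (with rational coefficients, in the
partial derivatives of σ of order at most 3) P such that σ³·ℬ_{ijklm} = P(∂^α σ);
in particular ℬ_{ijklm} has poles of order at most three along the zero set of σ. -/
theorem statement4 {g : ℕ} (hg : 1 ≤ g) (i j k l m : Fin g) :
    ∃ P : MvPolynomial {α : List (Fin g) // α.length ≤ 3} ℚ,
      ∀ σ : (Fin g → ℂ) → ℂ, ContDiff ℂ ⊤ σ → ∀ u : Fin g → ℂ, σ u ≠ 0 →
        σ u ^ 3 * Bfun σ i j k l m u
          = MvPolynomial.aeval (fun v : {α : List (Fin g) // α.length ≤ 3} =>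
              pdIter v.1 σ u) P := by
  refine ⟨MvPolynomial.C (1/3 : ℚ) * (0
      + 3 * X ⟨[], by simp⟩ * X ⟨[i, j], by simp⟩ * X ⟨[k, l, m], by simp⟩
      - 2 * X ⟨[], by simp⟩ * X ⟨[i, j, k], by simp⟩ * X ⟨[l, m], by simp⟩
      - 2 * X ⟨[], by simp⟩ * X ⟨[i, j, l], by simp⟩ * X ⟨[k, m], by simp⟩
      - 2 * X ⟨[], by simp⟩ * X ⟨[i, j, m], by simp⟩ * X ⟨[k, l], by simp⟩
      + X ⟨[], by simp⟩ * X ⟨[i, k, l], by simp⟩ * X ⟨[j, m], by simp⟩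
      + X ⟨[], by simp⟩ * X ⟨[i, k, m], by simp⟩ * X ⟨[j, l], by simp⟩
      + X ⟨[], by simp⟩ * X ⟨[i, l, m], by simp⟩ * X ⟨[j, k], by simp⟩
      - 3 * X ⟨[i], by simp⟩ * X ⟨[j], by simp⟩ * X ⟨[k, l, m], by simp⟩
      + X ⟨[i], by simp⟩ * X ⟨[j, k], by simp⟩ * X ⟨[l, m], by simp⟩
      + X ⟨[i], by simp⟩ * X ⟨[j, l], by simp⟩ * X ⟨[k, m], by simp⟩
      + X ⟨[i], by simp⟩ * X ⟨[j, m], by simp⟩ * X ⟨[k, l], by simp⟩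
      - X ⟨[i, j], by simp⟩ * X ⟨[k], by simp⟩ * X ⟨[l, m], by simp⟩
      - X ⟨[i, j], by simp⟩ * X ⟨[k, l], by simp⟩ * X ⟨[m], by simp⟩
      - X ⟨[i, j], by simp⟩ * X ⟨[k, m], by simp⟩ * X ⟨[l], by simp⟩
      + 2 * X ⟨[i, j, k], by simp⟩ * X ⟨[l], by simp⟩ * X ⟨[m], by simp⟩
      + 2 * X ⟨[i, j, l], by simp⟩ * X ⟨[k], by simp⟩ * X ⟨[m], by simp⟩
      + 2 * X ⟨[i, j, m], by simp⟩ * X ⟨[k], by simp⟩ * X ⟨[l], by simp⟩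
      + 2 * X ⟨[i, k], by simp⟩ * X ⟨[j], by simp⟩ * X ⟨[l, m], by simp⟩
      - X ⟨[i, k], by simp⟩ * X ⟨[j, l], by simp⟩ * X ⟨[m], by simp⟩
      - X ⟨[i, k], by simp⟩ * X ⟨[j, m], by simp⟩ * X ⟨[l], by simp⟩
      - X ⟨[i, k, l], by simp⟩ * X ⟨[j], by simp⟩ * X ⟨[m], by simp⟩
      - X ⟨[i, k, m], by simp⟩ * X ⟨[j], by simp⟩ * X ⟨[l], by simp⟩
      + 2 * X ⟨[i, l], by simp⟩ * X ⟨[j], by simp⟩ * X ⟨[k, m], by simp⟩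
      - X ⟨[i, l], by simp⟩ * X ⟨[j, k], by simp⟩ * X ⟨[m], by simp⟩
      - X ⟨[i, l], by simp⟩ * X ⟨[j, m], by simp⟩ * X ⟨[k], by simp⟩
      - X ⟨[i, l, m], by simp⟩ * X ⟨[j], by simp⟩ * X ⟨[k], by simp⟩
      + 2 * X ⟨[i, m], by simp⟩ * X ⟨[j], by simp⟩ * X ⟨[k, l], by simp⟩
      - X ⟨[i, m], by simp⟩ * X ⟨[j, k], by simp⟩ * X ⟨[l], by simp⟩
      - X ⟨[i, m], by simp⟩ * X ⟨[j, l], by simp⟩ * X ⟨[k], by simp⟩), ?_⟩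
  intro σ hσ u h0
  have hc : (algebraMap ℚ ℂ) ((1 : ℚ)/3) = (1 : ℂ)/3 := by
    simp [map_div₀]
  have hklm := wp3_eq hσ k l m u h0
  have hilm := wp3_eq hσ i l m u h0
  have hikm := wp3_eq hσ i k m u h0
  have hikl := wp3_eq hσ i k l u h0
  have hijm := wp3_eq hσ i j m u h0
  have hijl := wp3_eq hσ i j l u h0
  have hijk := wp3_eq hσ i j k u h0
  simp only [map_mul, map_add, map_sub, map_ofNat, map_zero, MvPolynomial.aeval_X,
    MvPolynomial.aeval_C, hc, pdIter, List.foldl_cons, List.foldl_nil]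
  simp only [Bfun, wp2, hklm, hilm, hikm, hikl, hijm, hijl, hijk]
  field_simp [h0]
  ring
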